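/- Let H be a proper subgroup of a finite group G, V an F H-module (char F ∤ |G|), W = Ind_H^G V = ⊕_{g∈C} g·V with 1 ∈ C, and let R = S(W)/J where J is the ideal generated by all products (g·v)(g'·v') with v,v' ∈ V and g ≠ g' in C. Let T ⊂ R be the image of S(V). Then R_+^G R ∩ T ⊆ T_+^H T_+. -/

import Mathlib

noncomputable section
open MvPolynomial

variable {F : Type} [Field F]

/-- The algebra homomorphism between polynomial algebras (viewed as symmetric algebras)
induced by a linear map between the spaces of variables (the degree one components). -/
noncomputable def algOf {α β : Type} [Fintype α] [Fintype β] [DecidableEq α]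
    (f : (α → F) →ₗ[F] (β → F)) :
    MvPolynomial α F →ₐ[F] MvPolynomial β F :=
  aeval fun j => ∑ i, f (Pi.single j 1) i • X i

/-- The embedding of the space of linear forms into the polynomial algebra. -/
noncomputable def lin {β : Type} [Fintype β] (w : β → F) : MvPolynomial β F :=
  ∑ i, w i • X i

section auxx
variable {α β γ : Type} [Fintype α] [Fintype β] [Fintype γ]

lemma lin_add (w w' : β → F) : lin (w + w') = lin w + lin w' := by
  simp [lin, add_smul, Finset.sum_add_distrib]

lemma lin_zero : lin (0 : β → F) = 0 := by simp [lin]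

lemma lin_smul (r : F) (w : β → F) : lin (r • w) = r • lin w := by
  simp [lin, Finset.smul_sum, smul_smul]

lemma lin_single [DecidableEq β] (j : β) : lin (Pi.single j (1:F)) = X j := by
  rw [lin, Finset.sum_eq_single j] <;> simp +contextual [Pi.single_apply]

lemma lin_sum {ι : Type} (s : Finset ι) (w : ι → β → F) :
    lin (∑ i ∈ s, w i) = ∑ i ∈ s, lin (w i) := by
  classical
  induction s using Finset.induction with
  | empty => simp [lin_zero]
  | @insert a s h ih => simp [Finset.sum_insert h, lin_add, ih]

lemma algOf_X [DecidableEq α] (f : (α → F) →ₗ[F] (β → F)) (j : α) :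
    algOf f (X j) = lin (f (Pi.single j 1)) := by
  simp [algOf, lin]

lemma algOf_lin [DecidableEq α] (f : (α → F) →ₗ[F] (β → F)) (w : α → F) :
    algOf f (lin w) = lin (f w) := by
  have : w = ∑ j, (w j) • (Pi.single j (1:F) : α → F) := by
    simp_rw [← Pi.single_smul, smul_eq_mul, mul_one]
    exact (Finset.univ_sum_single w).symm
  rw [lin, map_sum]
  simp_rw [map_smul, algOf_X, ← lin_smul, ← map_smul, ← lin_sum, ← map_sum]
  congr 1
  exact congrArg f this.symm

lemma algOf_comp [DecidableEq α] [DecidableEq β] (f : (β → F) →ₗ[F] (γ → F)) (g : (α → F) →ₗ[F] (β → F)) (p : MvPolynomial α F) :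
    algOf f (algOf g p) = algOf (f ∘ₗ g) p := by
  have : (algOf f).comp (algOf g) = algOf (f ∘ₗ g) := by
    apply MvPolynomial.algHom_ext
    intro j
    rw [AlgHom.comp_apply, algOf_X, algOf_lin, algOf_X, LinearMap.comp_apply]
  exact AlgHom.congr_fun this p

lemma algOf_id [DecidableEq α] (p : MvPolynomial α F) : algOf (LinearMap.id) p = p := by
  have : algOf (LinearMap.id : (α → F) →ₗ[F] (α → F)) = AlgHom.id F (MvPolynomial α F) := by
    apply MvPolynomial.algHom_ext
    intro j
    simp [algOf_X, lin_single]
  rw [this]; rfl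

lemma constantCoeff_lin (w : β → F) : constantCoeff (lin w) = 0 := by
  simp [lin]

lemma constantCoeff_algOf [DecidableEq α] (f : (α → F) →ₗ[F] (β → F)) (p : MvPolynomial α F) :
    constantCoeff (algOf f p) = constantCoeff p := by
  induction p using MvPolynomial.induction_on with
  | C r => simp [algOf]
  | add p q hp hq => simp [map_add, hp, hq]
  | mul_X p j hp => simp [map_mul, hp, algOf_X, constantCoeff_lin]

lemma algOf_zero [DecidableEq α] (p : MvPolynomial α F) :
    algOf (0 : (α → F) →ₗ[F] (β → F)) p = MvPolynomial.C (constantCoeff p) := by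
  show aeval _ p = _
  have h : (fun j : α => ∑ i, ((0 : (α → F) →ₗ[F] (β → F)) (Pi.single j 1)) i •
      (X i : MvPolynomial β F)) = fun _ => 0 := by simp
  rw [h, aeval_zero']
  rfl

end auxx





/-- The subalgebra of `G`-invariants of the symmetric algebra of a representation. -/
def invariants {G : Type} [Group G] {α : Type} [Fintype α] [DecidableEq α]
    (ρ : Representation F G (α → F)) : Subalgebra F (MvPolynomial α F) where
  carrier := {p | ∀ g : G, algOf (ρ g) p = p}
  mul_mem' := fun ha hb g => by rw [map_mul, ha g, hb g]
  add_mem' := fun ha hb g => by rw [map_add, ha g, hb g]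
  algebraMap_mem' := fun r g => (algOf (ρ g)).commutes r

variable {G : Type} [Group G] {α : Type} [Fintype α] [DecidableEq α]

/-- The invariant ring is generated as an `F`-algebra in degrees at most `d`. -/
def genLE (ρ : Representation F G (α → F)) (d : ℕ) : Prop :=
  Algebra.adjoin F {p : MvPolynomial α F | p ∈ invariants ρ ∧ p.totalDegree ≤ d}
    = invariants ρ

/-- The Noether number `β(G,W)` of a representation. -/
def noether (ρ : Representation F G (α → F)) : ℕ := sInf {d | genLE ρ d}

/-- The Hilbert ideal: the ideal of `S(W)` generated by the invariants of positive degree. -/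
def hilbertIdeal (ρ : Representation F G (α → F)) : Ideal (MvPolynomial α F) :=
  Ideal.span {p | p ∈ invariants ρ ∧ constantCoeff p = 0}

/-- `b(G,W)`: the top degree of the algebra of coinvariants `S(W)/S(W)₊^G S(W)`. -/
def coinvTop (ρ : Representation F G (α → F)) : ℕ :=
  sSup {d | ∃ p : MvPolynomial α F, p.IsHomogeneous d ∧ p ∉ hilbertIdeal ρ}

/-- `b_k(G,W)`: the top degree of `S(W)/((S(W)₊^G)^k S(W))`. -/
def coinvTopK (ρ : Representation F G (α → F)) (k : ℕ) : ℕ :=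
  sSup {d | ∃ p : MvPolynomial α F, p.IsHomogeneous d ∧ p ∉ (hilbertIdeal ρ) ^ k}

/-- The span of all products of `k` positive-degree invariants,
i.e. `(S(W)₊^G)^k` computed inside the invariant ring. -/
def prodPow (ρ : Representation F G (α → F)) (k : ℕ) : Submodule F (MvPolynomial α F) :=
  Submodule.span F {x | ∃ f : Fin k → MvPolynomial α F,
    (∀ i, f i ∈ invariants ρ ∧ constantCoeff (f i) = 0) ∧ x = ∏ i, f i}

/-- The `k`-th Noether number `β_k(G,W)`, the top degree of `S(W)^G/(S(W)₊^G)^{k+1}`. -/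
def noetherK (ρ : Representation F G (α → F)) (k : ℕ) : ℕ :=
  sSup {d | ∃ p, p ∈ invariants ρ ∧ p.IsHomogeneous d ∧ p ∉ prodPow ρ (k+1)}

/-- `β(G)`: the supremum of the Noether numbers over all finite dimensional modules. -/
def noetherSup (F G : Type) [Field F] [Group G] : ℕ∞ :=
  ⨆ (n : ℕ) (ρ : Representation F G (Fin n → F)), (noether ρ : ℕ∞)

/-- `b(G)`: the supremum of `b(G,W)` over all finite dimensional modules. -/
def coinvSup (F G : Type) [Field F] [Group G] : ℕ∞ :=
  ⨆ (n : ℕ) (ρ : Representation F G (Fin n → F)), (coinvTop ρ : ℕ∞)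

/-- `β_k(G)`: the supremum of the `k`-th Noether numbers over all modules. -/
def noetherKSup (F G : Type) [Field F] [Group G] (k : ℕ) : ℕ∞ :=
  ⨆ (n : ℕ) (ρ : Representation F G (Fin n → F)), (noetherK ρ k : ℕ∞)

/-- The ideal `J` of `S(W)` generated by the products `(g·v)(g'·v')` of linear forms
coming from distinct summands of `W = ⊕_{g ∈ C} g·V`. -/
noncomputable def Jideal {G : Type} [Group G] {n m : ℕ}
    (σ : Representation F G (Fin m → F)) (ι : (Fin n → F) →ₗ[F] (Fin m → F))
    (C : Set G) : Ideal (MvPolynomial (Fin m) F) :=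
  Ideal.span {x | ∃ c ∈ C, ∃ c' ∈ C, c ≠ c' ∧ ∃ v v' : Fin n → F,
    x = lin (σ c (ι v)) * lin (σ c' (ι v'))}

set_option maxHeartbeats 2000000 in
set_option synthInstance.maxHeartbeats 400000 in
/-- in `R = S(W)/J`, with `T` the image of `S(V)`, one has
`R₊^G R ∩ T ⊆ T₊^H T₊`.  Invariance of a class in `R` is expressed via representatives
(`J` is a `G`-stable ideal), and positivity via vanishing constant coefficient. -/
theorem stmt8
    {G : Type} [Group G] [Fintype G]
    (hchar : (Fintype.card G : F) ≠ 0)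
    (H : Subgroup G) {nV m : ℕ}
    (ρ : Representation F H (Fin nV → F))
    (σ : Representation F G (Fin m → F))
    (ι : (Fin nV → F) →ₗ[F] (Fin m → F)) (hι : Function.Injective ι)
    (hequiv : ∀ h : H, σ h ∘ₗ ι = ι ∘ₗ ρ h)
    (C : Set G) (hC : Subgroup.IsComplement C (H : Set G)) (h1 : (1:G) ∈ C)
    (hindep : iSupIndep fun c : C => (LinearMap.range ι).map (σ c.1))
    (hspan : ⨆ c : C, (LinearMap.range ι).map (σ c.1) = ⊤)
    (hHG : H ≠ ⊤) :
    ∀ x : MvPolynomial (Fin m) F ⧸ Jideal σ ι C,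
      x ∈ Ideal.span {y | (∃ p, MvPolynomial.constantCoeff p = 0 ∧
            Ideal.Quotient.mk (Jideal σ ι C) p = y) ∧
          (∀ (g : G) (p), Ideal.Quotient.mk (Jideal σ ι C) p = y →
            Ideal.Quotient.mk (Jideal σ ι C) (algOf (σ g) p) = y)} →
      (∃ q : MvPolynomial (Fin nV) F,
        Ideal.Quotient.mk (Jideal σ ι C) (algOf ι q) = x) →
      x ∈ Submodule.span F {y | ∃ a b : MvPolynomial (Fin m) F ⧸ Jideal σ ι C,
        ((∃ q, MvPolynomial.constantCoeff q = 0 ∧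
            Ideal.Quotient.mk (Jideal σ ι C) (algOf ι q) = a) ∧
          (∀ (h : H) (p), Ideal.Quotient.mk (Jideal σ ι C) p = a →
            Ideal.Quotient.mk (Jideal σ ι C) (algOf (σ h) p) = a)) ∧
        (∃ q, MvPolynomial.constantCoeff q = 0 ∧
          Ideal.Quotient.mk (Jideal σ ι C) (algOf ι q) = b) ∧
        y = a * b} := by
  classical
  set J : Ideal (MvPolynomial (Fin m) F) := Jideal σ ι C with hJdef
  set mk : MvPolynomial (Fin m) F →+* (MvPolynomial (Fin m) F ⧸ J) := Ideal.Quotient.mk J with hmkdef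
  intro x hxI hxT
  -- group-theoretic helpers
  have huniq : ∀ (c c' h h' : G), c ∈ C → c' ∈ C → h ∈ H → h' ∈ H →
      c * h = c' * h' → c = c' := by
    intro c c' h h' hc hc' hh hh' heq
    have := hC.injective (a₁ := (⟨c, hc⟩, ⟨h, hh⟩)) (a₂ := (⟨c', hc'⟩, ⟨h', hh'⟩)) heq
    exact congrArg (fun p => (p.1 : G)) this
  have hCH : ∀ c ∈ C, c ∈ H → c = 1 := by
    intro c hc hcH
    exact huniq c 1 1 c hc h1 (one_mem H) hcH (by group)
  have hfac : ∀ g : G, ∃ c ∈ C, ∃ h ∈ H, g = c * h := by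
    intro g
    obtain ⟨⟨c, h⟩, hch, -⟩ := hC.existsUnique g
    exact ⟨c.1, c.2, h.1, h.2, hch.symm⟩
  -- a coset representative outside H
  have hc₀ : ∃ c₀ ∈ C, c₀ ≠ (1:G) := by
    by_contra hcon
    push_neg at hcon
    apply hHG
    rw [Subgroup.eq_top_iff']
    intro g
    obtain ⟨c, hc, h, hh, rfl⟩ := hfac g
    rw [hcon c hc, one_mul]
    exact hh
  obtain ⟨c₀, hc₀C, hc₀1⟩ := hc₀
  haveI : Fintype ↥C := Fintype.ofFinite ↥C
  -- the direct sum decomposition and projections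
  set U : ↥C → Submodule F (Fin m → F) := fun c => (LinearMap.range ι).map (σ c.1) with hUdef
  have internal : DirectSum.IsInternal U :=
    DirectSum.isInternal_submodule_of_iSupIndep_of_iSup_eq_top hindep hspan
  set e : (DirectSum ↥C fun c => ↥(U c)) ≃ₗ[F] (Fin m → F) :=
    LinearEquiv.ofBijective (DirectSum.coeLinearMap U) internal with hedef
  set P : ↥C → ((Fin m → F) →ₗ[F] (Fin m → F)) := fun c =>
    (U c).subtype ∘ₗ (DirectSum.component F ↥C (fun c => ↥(U c)) c) ∘ₗ (e.symm : (Fin m → F) →ₗ[F] _) with hPdef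
  have hPmem : ∀ (c : ↥C) w, P c w ∈ U c := by
    intro c w
    simp only [hPdef, LinearMap.comp_apply]
    exact Submodule.coe_mem _
  have hPsum : ∀ w, ∑ c, P c w = w := by
    intro w
    have h1 : ∑ c, DirectSum.of (fun c => ↥(U c)) c ((e.symm w) c) = e.symm w :=
      DirectSum.sum_univ_of _
    have h2 : ∀ c : ↥C, P c w
        = DirectSum.coeLinearMap U (DirectSum.of (fun c => ↥(U c)) c ((e.symm w) c)) := by
      intro c
      rw [DirectSum.coeLinearMap_of]
      rfl
    calc ∑ c, P c w
        = ∑ c, DirectSum.coeLinearMap U (DirectSum.of (fun c => ↥(U c)) c ((e.symm w) c)) :=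
          Finset.sum_congr rfl (fun c _ => h2 c)
      _ = DirectSum.coeLinearMap U (∑ c, DirectSum.of (fun c => ↥(U c)) c ((e.symm w) c)) :=
          (map_sum _ _ _).symm
      _ = DirectSum.coeLinearMap U (e.symm w) := by rw [h1]
      _ = e (e.symm w) := rfl
      _ = w := e.apply_symm_apply w
  have hPU : ∀ (c c' : ↥C) w, w ∈ U c' → P c w = if c' = c then w else 0 := by
    intro c c' w hw
    by_cases h : c' = c
    · subst h
      rw [if_pos rfl]
      have h2 := internal.ofBijective_coeLinearMap_of_mem (i := c') hw
      show ((e.symm w) c' : Fin m → F) = w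
      rw [hedef, h2]
    · rw [if_neg h]
      have h2 := internal.ofBijective_coeLinearMap_of_mem_ne (i := c') (j := c) h hw
      show ((e.symm w) c : Fin m → F) = 0
      rw [hedef, h2]
      rfl
  -- generators of J
  have hgenJ : ∀ (c c' : ↥C), c ≠ c' → ∀ w ∈ U c, ∀ w' ∈ U c', lin w * lin w' ∈ J := by
    intro c c' hne w hw w' hw'
    rw [hUdef] at hw hw'
    obtain ⟨y, hy, rfl⟩ := Submodule.mem_map.mp hw
    obtain ⟨v, rfl⟩ := LinearMap.mem_range.mp hy
    obtain ⟨y', hy', rfl⟩ := Submodule.mem_map.mp hw'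
    obtain ⟨v', rfl⟩ := LinearMap.mem_range.mp hy'
    exact Ideal.subset_span ⟨c.1, c.2, c'.1, c'.2, fun h => hne (Subtype.ext h), v, v', rfl⟩
  set M : ↥C → Ideal (MvPolynomial (Fin m) F) :=
    fun c => Ideal.span {x | ∃ w ∈ U c, x = lin w} with hMdef
  have hMJ : ∀ (c c' : ↥C), c ≠ c' → ∀ x ∈ M c, ∀ y ∈ M c', x * y ∈ J := by
    intro c c' hne xx hx yy hy
    have hle : M c * M c' ≤ J := by
      rw [hMdef]
      rw [Ideal.span_mul_span]
      refine Ideal.span_le.mpr ?_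
      rintro z hz
      rw [Set.mem_mul] at hz
      obtain ⟨s, ⟨w, hw, rfl⟩, t, ⟨w', hw', rfl⟩, rfl⟩ := hz
      exact hgenJ c c' hne w hw w' hw'
    exact hle (Ideal.mul_mem_mul hx hy)
  -- auxiliary: how σ g moves the summands
  have hσU : ∀ (g : G) (c : ↥C) u, u ∈ U c →
      ∃ (c₂ : ↥C) (h : G), h ∈ H ∧ g * c.1 = c₂.1 * h ∧ σ g u ∈ U c₂ := by
    intro g c u hu
    rw [hUdef] at hu
    obtain ⟨y, hy, rfl⟩ := Submodule.mem_map.mp hu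
    obtain ⟨v, rfl⟩ := LinearMap.mem_range.mp hy
    obtain ⟨c₂, hc₂, h₂, hh₂, hgc⟩ := hfac (g * c.1)
    refine ⟨⟨c₂, hc₂⟩, h₂, hh₂, hgc, ?_⟩
    have h1 : σ g (σ c.1 (ι v)) = σ c₂ (ι (ρ ⟨h₂, hh₂⟩ v)) := by
      have e1 : σ g (σ c.1 (ι v)) = σ (g * c.1) (ι v) := by rw [map_mul]; rfl
      rw [e1, hgc, map_mul]
      show σ c₂ (σ h₂ (ι v)) = _
      exact congrArg _ (LinearMap.congr_fun (hequiv ⟨h₂, hh₂⟩) v)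
    rw [h1]
    exact ⟨ι (ρ ⟨h₂, hh₂⟩ v), ⟨_, rfl⟩, rfl⟩
  -- J is G-stable
  have hJstable : ∀ (g : G), ∀ a ∈ J, algOf (σ g) a ∈ J := by
    intro g
    suffices hle : J ≤ Ideal.comap (algOf (σ g)).toRingHom J from fun a ha => hle ha
    refine Ideal.span_le.mpr ?_
    rintro z ⟨c, hc, c', hc', hne, v, v', rfl⟩
    have m1 : σ c (ι v) ∈ U ⟨c, hc⟩ := ⟨ι v, ⟨v, rfl⟩, rfl⟩
    have m2 : σ c' (ι v') ∈ U ⟨c', hc'⟩ := ⟨ι v', ⟨v', rfl⟩, rfl⟩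
    obtain ⟨c₂, h₂, hh₂, hf₂, hm₂⟩ := hσU g ⟨c, hc⟩ _ m1
    obtain ⟨c₂', h₂', hh₂', hf₂', hm₂'⟩ := hσU g ⟨c', hc'⟩ _ m2
    have hne2 : c₂ ≠ c₂' := by
      intro hEq
      apply hne
      refine huniq c c' (h₂⁻¹ * h₂') 1 hc hc' (mul_mem (inv_mem hh₂) hh₂') (one_mem H) ?_
      rw [mul_one]
      have e1 : (c : G) = g⁻¹ * (c₂.1 * h₂) := by rw [← hf₂]; group
      have e2 : (c' : G) = g⁻¹ * (c₂'.1 * h₂') := by rw [← hf₂']; group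
      rw [e1, e2, hEq]
      group
    simp only [SetLike.mem_coe, Ideal.mem_comap]
    show algOf (σ g) (lin (σ c (ι v)) * lin (σ c' (ι v'))) ∈ J
    rw [map_mul, algOf_lin, algOf_lin]
    exact hgenJ c₂ c₂' hne2 _ hm₂ _ hm₂'
  -- the projections kill J
  have hEJ : ∀ (c : ↥C), ∀ a ∈ J, algOf (P c) a ∈ J := by
    intro c
    suffices hle : J ≤ Ideal.comap (algOf (P c)).toRingHom J from fun a ha => hle ha
    refine Ideal.span_le.mpr ?_
    rintro z ⟨c₁, hc₁, c₁', hc₁', hne, v, v', rfl⟩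
    have m1 : σ c₁ (ι v) ∈ U ⟨c₁, hc₁⟩ := ⟨ι v, ⟨v, rfl⟩, rfl⟩
    have m2 : σ c₁' (ι v') ∈ U ⟨c₁', hc₁'⟩ := ⟨ι v', ⟨v', rfl⟩, rfl⟩
    simp only [SetLike.mem_coe, Ideal.mem_comap]
    show algOf (P c) (lin (σ c₁ (ι v)) * lin (σ c₁' (ι v'))) ∈ J
    rw [map_mul, algOf_lin, algOf_lin, hPU c ⟨c₁, hc₁⟩ _ m1, hPU c ⟨c₁', hc₁'⟩ _ m2]
    by_cases h : (⟨c₁, hc₁⟩ : ↥C) = c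
    · have h' : (⟨c₁', hc₁'⟩ : ↥C) ≠ c := by
        intro hEq
        exact hne (congrArg Subtype.val (h.trans hEq.symm))
      rw [if_neg h', lin_zero, mul_zero]
      exact Ideal.zero_mem J
    · rw [if_neg h, lin_zero, zero_mul]
      exact Ideal.zero_mem J
  -- projections vs the ideals M c
  have hEM : ∀ (c : ↥C) (a : MvPolynomial (Fin m) F),
      algOf (P c) a - MvPolynomial.C (constantCoeff a) ∈ M c := by
    intro c a
    induction a using MvPolynomial.induction_on with
    | C r =>
      have h1 : algOf (P c) (MvPolynomial.C r) = MvPolynomial.C r := by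
        rw [← MvPolynomial.algebraMap_eq]
        exact (algOf (P c)).commutes r
      rw [h1, constantCoeff_C, sub_self]
      exact Ideal.zero_mem _
    | add p q hp hq =>
      have h1 : algOf (P c) (p + q) - MvPolynomial.C (constantCoeff (p + q))
          = (algOf (P c) p - MvPolynomial.C (constantCoeff p))
            + (algOf (P c) q - MvPolynomial.C (constantCoeff q)) := by
        rw [map_add, map_add, map_add]
        ring
      rw [h1]
      exact Ideal.add_mem _ hp hq
    | mul_X p i hp =>
      have h0 : constantCoeff (p * X i) = 0 := by simp
      rw [h0, map_zero, sub_zero, map_mul, algOf_X]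
      exact Ideal.mul_mem_left _ _
        (Ideal.subset_span ⟨P c (Pi.single i 1), hPmem c _, rfl⟩)
  haveI : Nonempty ↥C := ⟨⟨1, h1⟩⟩
  set K : ℕ := Fintype.card ↥C with hKdef
  obtain ⟨k', hk'⟩ : ∃ n, K = n + 1 := ⟨K - 1, (Nat.succ_pred_eq_of_pos Fintype.card_pos).symm⟩
  -- the decomposition of R₊ modulo J
  have hdec : ∀ a : MvPolynomial (Fin m) F,
      a - (∑ c, algOf (P c) a) + k' • MvPolynomial.C (constantCoeff a) ∈ J := by
    intro a
    induction a using MvPolynomial.induction_on with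
    | C r =>
      have hCr : ∀ c : ↥C, algOf (P c) (MvPolynomial.C r) = MvPolynomial.C r := by
        intro c
        have h := (algOf (P c)).commutes r
        rwa [MvPolynomial.algebraMap_eq] at h
      have hsum : (∑ c : ↥C, algOf (P c) (MvPolynomial.C r)) = K • MvPolynomial.C r := by
        rw [Finset.sum_congr rfl (fun c _ => hCr c), Finset.sum_const, Finset.card_univ]
      have hz : (MvPolynomial.C r - K • MvPolynomial.C r
          + k' • MvPolynomial.C (constantCoeff (MvPolynomial.C r : MvPolynomial (Fin m) F)) : MvPolynomial (Fin m) F) = 0 := by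
        rw [constantCoeff_C, hk', succ_nsmul]
        abel
      rw [hsum, hz]
      exact Ideal.zero_mem J
    | add p q hp hq =>
      have h1 : (p + q) - (∑ c, algOf (P c) (p + q)) + k' • MvPolynomial.C (constantCoeff (p + q))
          = (p - (∑ c, algOf (P c) p) + k' • MvPolynomial.C (constantCoeff p))
            + (q - (∑ c, algOf (P c) q) + k' • MvPolynomial.C (constantCoeff q)) := by
        simp only [map_add, Finset.sum_add_distrib, smul_add]
        abel
      rw [h1]
      exact Ideal.add_mem _ hp hq
    | mul_X p i hp =>
      have h0 : constantCoeff (p * X i) = 0 := by simp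
      rw [h0, map_zero, smul_zero, add_zero]
      have hXi : (X i : MvPolynomial (Fin m) F) = ∑ c, lin (P c (Pi.single i 1)) := by
        rw [← lin_sum, hPsum]
        exact (lin_single i).symm
      have key : ∀ c : ↥C, (p - algOf (P c) p) * lin (P c (Pi.single i 1)) ∈ J := by
        intro c
        have hid : p - algOf (P c) p
            = (p - (∑ c', algOf (P c') p) + k' • MvPolynomial.C (constantCoeff p))
              + ∑ c' ∈ Finset.univ.erase c,
                  (algOf (P c') p - MvPolynomial.C (constantCoeff p)) := by
          rw [Finset.sum_sub_distrib, Finset.sum_erase_eq_sub (Finset.mem_univ c),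
            Finset.sum_const, Finset.card_erase_of_mem (Finset.mem_univ c), Finset.card_univ]
          have hKk : K - 1 = k' := by omega
          rw [hKk]
          abel
        rw [hid, add_mul, Finset.sum_mul]
        refine Ideal.add_mem _ (Ideal.mul_mem_right _ _ hp) (Ideal.sum_mem _ ?_)
        intro c' hc'
        exact hMJ c' c (Finset.ne_of_mem_erase hc') _ (hEM c' p) _
          (Ideal.subset_span ⟨P c (Pi.single i 1), hPmem c _, rfl⟩)
      have hfin : p * X i - ∑ c, algOf (P c) (p * X i)
          = ∑ c, (p - algOf (P c) p) * lin (P c (Pi.single i 1)) := by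
        simp only [map_mul, algOf_X, sub_mul, Finset.sum_sub_distrib]
        rw [← Finset.mul_sum, ← hXi]
      rw [hfin]
      exact Ideal.sum_mem _ (fun c _ => key c)
  -- commutation of projections with the group action
  have hcomm : ∀ (g : G) (cs ct : ↥C), (∃ h ∈ H, g * cs.1 = ct.1 * h) →
      P ct ∘ₗ σ g = σ g ∘ₗ P cs := by
    rintro g cs ct ⟨h₀, hh₀, hfac0⟩
    apply LinearMap.ext; intro w
    simp only [LinearMap.comp_apply]
    conv_lhs => rw [← hPsum w]
    conv_rhs => rw [← hPsum w]
    simp only [map_sum]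
    refine Finset.sum_congr rfl (fun c _ => ?_)
    obtain ⟨c₂, h₂, hh₂, hf₂, hm₂⟩ := hσU g c (P c w) (hPmem c w)
    by_cases hcs : c = cs
    · subst hcs
      have hc₂ : c₂ = ct := by
        apply Subtype.ext
        exact huniq c₂.1 ct.1 h₂ h₀ c₂.2 ct.2 hh₂ hh₀ (by rw [← hf₂, ← hfac0])
      rw [hPU ct c₂ _ hm₂, if_pos hc₂, hPU c c _ (hPmem c w), if_pos rfl]
    · have hc₂ : c₂ ≠ ct := by
        intro hEq
        apply hcs
        apply Subtype.ext
        refine huniq c.1 cs.1 (h₂⁻¹ * h₀) 1 c.2 cs.2 (mul_mem (inv_mem hh₂) hh₀) (one_mem H) ?_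
        rw [mul_one]
        have e1 : (c.1 : G) = g⁻¹ * (c₂.1 * h₂) := by rw [← hf₂]; group
        have e2 : (cs.1 : G) = g⁻¹ * (ct.1 * h₀) := by rw [← hfac0]; group
        rw [e1, e2, hEq]
        group
      rw [hPU ct c₂ _ hm₂, if_neg hc₂, hPU cs c _ (hPmem c w), if_neg hcs, map_zero]
  -- factoring maps through ι
  have hfactor : ∀ (L : (Fin m → F) →ₗ[F] (Fin m → F)),
      (∀ w, L w ∈ LinearMap.range ι) → ∀ a : MvPolynomial (Fin m) F,
      ∃ u, constantCoeff u = constantCoeff a ∧ algOf L a = algOf ι u := by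
    intro L hL a
    obtain ⟨κ, hκ⟩ := LinearMap.exists_leftInverse_of_injective ι (LinearMap.ker_eq_bot.mpr hι)
    refine ⟨algOf (κ ∘ₗ L) a, constantCoeff_algOf _ _, ?_⟩
    rw [algOf_comp]
    have hLι : ι ∘ₗ (κ ∘ₗ L) = L := by
      apply LinearMap.ext; intro w
      obtain ⟨v, hv⟩ := hL w
      simp only [LinearMap.comp_apply]
      rw [← hv]
      have h7 : κ (ι v) = v := by
        have h8 := LinearMap.congr_fun hκ v
        simpa using h8
      rw [h7]
    rw [hLι]
  -- the two distinguished elements of C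
  set c1 : ↥C := ⟨1, h1⟩ with hc1def
  set cc0 : ↥C := ⟨c₀, hc₀C⟩ with hcc0def
  have hU1 : U c1 = LinearMap.range ι := by
    rw [hUdef]
    show Submodule.map (σ (1:G)) (LinearMap.range ι) = _
    rw [map_one]
    ext w
    simp [Submodule.mem_map]
  have hP1ι : P c1 ∘ₗ ι = ι := by
    apply LinearMap.ext; intro v
    have hm : ι v ∈ U c1 := by rw [hU1]; exact ⟨v, rfl⟩
    simp only [LinearMap.comp_apply]
    rw [hPU c1 c1 _ hm, if_pos rfl]
  have hPc0ι : P cc0 ∘ₗ ι = 0 := by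
    apply LinearMap.ext; intro v
    have hm : ι v ∈ U c1 := by rw [hU1]; exact ⟨v, rfl⟩
    simp only [LinearMap.comp_apply]
    rw [hPU cc0 c1 _ hm, if_neg (fun hEq => hc₀1 (congrArg Subtype.val hEq).symm)]
    rfl
  -- ring homomorphisms induced on the quotient
  have hEbarEx : ∀ c : ↥C,
      ∃ E : (MvPolynomial (Fin m) F ⧸ J) →+* (MvPolynomial (Fin m) F ⧸ J),
        ∀ a, E (mk a) = mk (algOf (P c) a) := by
    intro c
    refine ⟨Ideal.Quotient.lift J ((Ideal.Quotient.mk J).comp (algOf (P c)).toRingHom) ?_, ?_⟩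
    · intro a ha
      rw [RingHom.comp_apply, Ideal.Quotient.eq_zero_iff_mem]
      exact hEJ c a ha
    · intro a
      exact Ideal.Quotient.lift_mk J _ _
  choose Ebar hEbar using hEbarEx
  obtain ⟨Gbar, hGbar⟩ :
      ∃ Gb : (MvPolynomial (Fin m) F ⧸ J) →+* (MvPolynomial (Fin m) F ⧸ J),
        ∀ a, Gb (mk a) = mk (algOf (σ c₀⁻¹) a) := by
    refine ⟨Ideal.Quotient.lift J ((Ideal.Quotient.mk J).comp (algOf (σ c₀⁻¹)).toRingHom) ?_, ?_⟩
    · intro a ha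
      rw [RingHom.comp_apply, Ideal.Quotient.eq_zero_iff_mem]
      exact hJstable c₀⁻¹ a ha
    · intro a
      exact Ideal.Quotient.lift_mk J _ _
  -- the decomposition at quotient level
  have hdecQ : ∀ a : MvPolynomial (Fin m) F,
      mk a = mk (MvPolynomial.C (constantCoeff a))
        + ∑ c, mk (algOf (P c) a - MvPolynomial.C (constantCoeff a)) := by
    intro a
    have hz : (∑ c : ↥C, (algOf (P c) a - MvPolynomial.C (constantCoeff a)))
        = (∑ c, algOf (P c) a) - K • MvPolynomial.C (constantCoeff a) := by
      rw [Finset.sum_sub_distrib, Finset.sum_const, Finset.card_univ]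
    have h2 : a - (MvPolynomial.C (constantCoeff a)
        + ∑ c, (algOf (P c) a - MvPolynomial.C (constantCoeff a))) ∈ J := by
      have he : a - (MvPolynomial.C (constantCoeff a)
          + ∑ c, (algOf (P c) a - MvPolynomial.C (constantCoeff a)))
          = a - (∑ c, algOf (P c) a) + k' • MvPolynomial.C (constantCoeff a) := by
        rw [hz, hk', succ_nsmul]
        abel
      rw [he]
      exact hdec a
    calc mk a = mk (MvPolynomial.C (constantCoeff a)
          + ∑ c, (algOf (P c) a - MvPolynomial.C (constantCoeff a))) := by
          rw [hmkdef, Ideal.Quotient.eq]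
          exact h2
      _ = _ := by rw [map_add, map_sum]
  -- products decompose along the components
  have hprodQ : ∀ a b : MvPolynomial (Fin m) F, constantCoeff b = 0 →
      mk (a * b) = ∑ c, mk (algOf (P c) a * algOf (P c) b) := by
    intro a b hb0
    have hda := hdecQ a
    have hdb : mk b = ∑ c, mk (algOf (P c) b) := by
      have h := hdecQ b
      rw [hb0] at h
      simpa using h
    have hoff : ∀ (c c' : ↥C), c ≠ c' →
        mk (algOf (P c) a - MvPolynomial.C (constantCoeff a)) * mk (algOf (P c') b) = 0 := by
      intro c c' hne
      rw [← map_mul, hmkdef, Ideal.Quotient.eq_zero_iff_mem]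
      refine hMJ c c' hne _ (hEM c a) _ ?_
      have h := hEM c' b
      rwa [hb0, map_zero, sub_zero] at h
    rw [map_mul, hda, hdb]
    have hexp : (mk (MvPolynomial.C (constantCoeff a))
          + ∑ c, mk (algOf (P c) a - MvPolynomial.C (constantCoeff a)))
        * (∑ c, mk (algOf (P c) b))
        = ∑ c, (mk (MvPolynomial.C (constantCoeff a))
            + mk (algOf (P c) a - MvPolynomial.C (constantCoeff a))) * mk (algOf (P c) b) := by
      rw [add_mul, Finset.mul_sum]
      simp only [add_mul]
      rw [Finset.sum_add_distrib]
      congr 1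
      rw [Finset.sum_mul_sum]
      refine Finset.sum_congr rfl (fun c _ => ?_)
      rw [Finset.sum_eq_single c (fun c' _ hne => hoff c c' (Ne.symm hne))
        (fun hnotmem => absurd (Finset.mem_univ c) hnotmem)]
    rw [hexp]
    refine Finset.sum_congr rfl (fun c _ => ?_)
    rw [← map_add]
    have he : MvPolynomial.C (constantCoeff a)
        + (algOf (P c) a - MvPolynomial.C (constantCoeff a)) = algOf (P c) a := by ring
    rw [he, ← map_mul]
  -- span representation of x
  obtain ⟨fc, hfcsupp, hfcsum⟩ := Submodule.mem_span_set.mp hxI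
  set SY : Finset _ := fc.support with hSYdef
  have hrep : ∀ y ∈ SY, ∃ fyy, constantCoeff fyy = 0 ∧ mk fyy = y ∧
      ∀ g : G, mk (algOf (σ g) fyy) = y := by
    intro y hy
    obtain ⟨⟨p, hp0, hpy⟩, hinv⟩ := hfcsupp (Finset.mem_coe.mpr hy)
    exact ⟨p, hp0, hpy, fun g => hinv g p hpy⟩
  choose! fy hfy0 hfymk hfyinv using hrep
  have hrep2 : ∀ y : MvPolynomial (Fin m) F ⧸ J, ∃ ryy, mk ryy = fc y :=
    fun y => Ideal.Quotient.mk_surjective (fc y)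
  choose ry hry using hrep2
  have hxsum : x = ∑ y ∈ SY, mk (ry y * fy y) := by
    rw [← hfcsum]
    rw [Finsupp.sum]
    refine Finset.sum_congr rfl (fun y hy => ?_)
    rw [map_mul, hry, hfymk y hy, smul_eq_mul]
  obtain ⟨q, hq⟩ := hxT
  -- the constant coefficient of q vanishes
  have hkerJ : ∀ a ∈ J, constantCoeff a = 0 := by
    intro a ha
    have hle : J ≤ RingHom.ker (constantCoeff : MvPolynomial (Fin m) F →+* F) := by
      refine Ideal.span_le.mpr ?_
      rintro z ⟨c, hc, c', hc', hne, v, v', rfl⟩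
      rw [SetLike.mem_coe, RingHom.mem_ker, map_mul, constantCoeff_lin, zero_mul]
    exact hle ha
  have hq0 : constantCoeff q = 0 := by
    set ccQ : (MvPolynomial (Fin m) F ⧸ J) →+* F :=
      Ideal.Quotient.lift J (constantCoeff : MvPolynomial (Fin m) F →+* F) hkerJ with hccQ
    have h1 : ccQ x = constantCoeff q := by
      rw [← hq, hccQ, hmkdef, Ideal.Quotient.lift_mk]
      exact constantCoeff_algOf ι q
    have h2 : ccQ x = 0 := by
      rw [hxsum, map_sum]
      refine Finset.sum_eq_zero (fun y hy => ?_)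
      rw [hccQ, hmkdef, Ideal.Quotient.lift_mk, map_mul]
      have h3 : constantCoeff (fy y) = 0 := hfy0 y hy
      rw [h3, mul_zero]
    rw [← h1, h2]
  -- the component-extraction identity
  have hstar : ∀ c' : ↥C, Ebar c' x
      = ∑ y ∈ SY, mk (algOf (P c') (ry y) * algOf (P c') (fy y)) := by
    intro c'
    have hPP : ∀ c : ↥C, P c' ∘ₗ P c = if c = c' then P c else 0 := by
      intro c
      apply LinearMap.ext; intro w
      simp only [LinearMap.comp_apply]
      rw [hPU c' c _ (hPmem c w)]
      by_cases h : c = c'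
      · rw [if_pos h, if_pos h]
      · rw [if_neg h, if_neg h]; rfl
    have step1 : ∀ y ∈ SY, Ebar c' (mk (ry y * fy y))
        = ∑ c, mk (algOf (P c') (algOf (P c) (ry y)) * algOf (P c') (algOf (P c) (fy y))) := by
      intro y hy
      rw [show mk (ry y * fy y) = ∑ c, mk (algOf (P c) (ry y) * algOf (P c) (fy y)) from
        hprodQ _ _ (hfy0 y hy), map_sum]
      refine Finset.sum_congr rfl (fun c _ => ?_)
      rw [hEbar, map_mul]
    rw [hxsum, map_sum, Finset.sum_congr rfl step1, Finset.sum_comm]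
    rw [Finset.sum_eq_single c' (fun c _ hne => Finset.sum_eq_zero (fun y hy => by
        rw [algOf_comp, algOf_comp, hPP c, if_neg hne, algOf_zero, algOf_zero,
          hfy0 y hy, map_zero, mul_zero, map_zero]))
      (fun hnotmem => absurd (Finset.mem_univ c') hnotmem)]
    refine Finset.sum_congr rfl (fun y hy => ?_)
    rw [algOf_comp, algOf_comp, hPP c', if_pos rfl]
  -- evaluation at c = 1 and c = c₀
  have hstar1 : x = ∑ y ∈ SY, mk (algOf (P c1) (ry y) * algOf (P c1) (fy y)) := by
    have hEx1 : Ebar c1 x = x := by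
      rw [← hq, hEbar, algOf_comp, hP1ι]
    rw [← hEx1]
    exact hstar c1
  have h0 : (0 : MvPolynomial (Fin m) F ⧸ J)
      = ∑ y ∈ SY, mk (algOf (P cc0) (ry y) * algOf (P cc0) (fy y)) := by
    have hEx0 : Ebar cc0 x = 0 := by
      rw [← hq, hEbar, algOf_comp, hPc0ι, algOf_zero, hq0, map_zero, map_zero]
    rw [← hEx0]
    exact hstar cc0
  -- twisting the c₀ component back to the first one
  have hσinv : ∀ p : MvPolynomial (Fin m) F, algOf (σ c₀⁻¹) (algOf (σ c₀) p) = p := by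
    intro p
    rw [algOf_comp]
    have hσ1 : σ c₀⁻¹ ∘ₗ σ c₀ = LinearMap.id := by
      rw [← Module.End.mul_eq_comp, ← map_mul, inv_mul_cancel, map_one]
      rfl
    rw [hσ1, algOf_id]
  have htwist : ∀ y ∈ SY, mk (algOf (σ c₀⁻¹) (algOf (P cc0) (fy y)))
      = mk (algOf (P c1) (fy y)) := by
    intro y hy
    have hst1 : mk (algOf (P cc0) (fy y)) = mk (algOf (P cc0) (algOf (σ c₀) (fy y))) := by
      have h2 : mk (algOf (σ c₀) (fy y)) = mk (fy y) := by
        rw [hfyinv y hy c₀, hfymk y hy]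
      have h3 := congrArg (Ebar cc0) h2
      rw [hEbar, hEbar] at h3
      exact h3.symm
    have hst2 : algOf (P cc0) (algOf (σ c₀) (fy y)) = algOf (σ c₀) (algOf (P c1) (fy y)) := by
      rw [algOf_comp, algOf_comp, hcomm c₀ c1 cc0 ⟨1, one_mem H, by simp [hc1def, hcc0def]⟩]
    calc mk (algOf (σ c₀⁻¹) (algOf (P cc0) (fy y)))
        = Gbar (mk (algOf (P cc0) (fy y))) := (hGbar _).symm
      _ = Gbar (mk (algOf (σ c₀) (algOf (P c1) (fy y)))) := by rw [hst1, hst2]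
      _ = mk (algOf (σ c₀⁻¹) (algOf (σ c₀) (algOf (P c1) (fy y)))) := hGbar _
      _ = mk (algOf (P c1) (fy y)) := by rw [hσinv]
  have h0' : (0 : MvPolynomial (Fin m) F ⧸ J)
      = ∑ y ∈ SY, mk (algOf (σ c₀⁻¹) (algOf (P cc0) (ry y))) * mk (algOf (P c1) (fy y)) := by
    have hG0 := congrArg Gbar h0
    rw [map_zero, map_sum] at hG0
    calc (0 : MvPolynomial (Fin m) F ⧸ J)
        = ∑ y ∈ SY, Gbar (mk (algOf (P cc0) (ry y) * algOf (P cc0) (fy y))) := hG0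
      _ = _ := by
          refine Finset.sum_congr rfl (fun y hy => ?_)
          rw [hGbar, map_mul (algOf (σ c₀⁻¹)), map_mul (mk), htwist y hy]
  -- the final identity
  have hfinal : x = ∑ y ∈ SY, mk (algOf (P c1) (fy y)) *
      (mk (algOf (P c1) (ry y)) - mk (algOf (σ c₀⁻¹) (algOf (P cc0) (ry y)))) := by
    calc x = (∑ y ∈ SY, mk (algOf (P c1) (ry y) * algOf (P c1) (fy y)))
          - ∑ y ∈ SY, mk (algOf (σ c₀⁻¹) (algOf (P cc0) (ry y))) * mk (algOf (P c1) (fy y)) := by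
          rw [← h0', sub_zero]
          exact hstar1
      _ = _ := by
          rw [← Finset.sum_sub_distrib]
          refine Finset.sum_congr rfl (fun y hy => ?_)
          rw [map_mul]
          ring
  rw [hfinal]
  refine Submodule.sum_mem _ (fun y hy => Submodule.subset_span ?_)
  obtain ⟨u₁, hu₁0, hu₁⟩ := hfactor (P c1) (fun w => by rw [← hU1]; exact hPmem c1 w) (fy y)
  obtain ⟨u₂, hu₂0, hu₂⟩ := hfactor (P c1) (fun w => by rw [← hU1]; exact hPmem c1 w) (ry y)
  have hrange3 : ∀ w, (σ c₀⁻¹ ∘ₗ P cc0) w ∈ LinearMap.range ι := by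
    intro w
    have hm := hPmem cc0 w
    rw [hUdef] at hm
    obtain ⟨y₀, hy₀r, hy₀⟩ := Submodule.mem_map.mp hm
    obtain ⟨v, rfl⟩ := LinearMap.mem_range.mp hy₀r
    simp only [LinearMap.comp_apply]
    rw [← hy₀]
    have he : σ c₀⁻¹ (σ (cc0.1) (ι v)) = ι v := by
      have h5 : σ c₀⁻¹ (σ (cc0.1) (ι v)) = σ (c₀⁻¹ * cc0.1) (ι v) := by rw [map_mul]; rfl
      rw [h5]
      have h6 : c₀⁻¹ * cc0.1 = 1 := by rw [hcc0def]; exact inv_mul_cancel c₀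
      rw [h6, map_one]
      rfl
    rw [he]
    exact ⟨v, rfl⟩
  obtain ⟨u₃, hu₃0, hu₃⟩ := hfactor (σ c₀⁻¹ ∘ₗ P cc0) hrange3 (ry y)
  have hN : algOf (σ c₀⁻¹) (algOf (P cc0) (ry y)) = algOf ι u₃ := by
    rw [algOf_comp]
    exact hu₃
  refine ⟨mk (algOf (P c1) (fy y)),
    mk (algOf (P c1) (ry y)) - mk (algOf (σ c₀⁻¹) (algOf (P cc0) (ry y))),
    ⟨⟨u₁, ?_, ?_⟩, ?_⟩, ⟨u₂ - u₃, ?_, ?_⟩, rfl⟩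
  · rw [hu₁0]
    exact hfy0 y hy
  · rw [← hu₁]
  · -- H invariance of the first factor
    intro h p hp
    have hJd : mk (algOf (σ (h : G)) p) = mk (algOf (σ (h : G)) (algOf (P c1) (fy y))) := by
      rw [hmkdef, Ideal.Quotient.eq, ← map_sub]
      apply hJstable
      exact Ideal.Quotient.eq.mp hp
    rw [hJd]
    have e2 : algOf (σ (h : G)) (algOf (P c1) (fy y))
        = algOf (P c1) (algOf (σ (h : G)) (fy y)) := by
      rw [algOf_comp, algOf_comp, ← hcomm (h : G) c1 c1 ⟨(h : G), h.2, by simp [hc1def]⟩]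
    rw [e2]
    have e3 : mk (algOf (σ (h : G)) (fy y)) = mk (fy y) := by rw [hfyinv y hy, hfymk y hy]
    have e4 := congrArg (Ebar c1) e3
    rw [hEbar, hEbar] at e4
    exact e4
  · rw [map_sub, hu₂0, hu₃0, sub_self]
  · rw [map_sub, map_sub, ← hu₂, ← hN]


end
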